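/- Let φ : ℝ^m → ℝ be differentiable at every point, and suppose that the derivative of φ does not vanish on the zero level set, i.e. Dφ(x) ≠ 0 for every x with φ(x) = 0. Then the topological boundary of the set Ω := { x ∈ ℝ^m : φ(x) < 0 } equals the zero level set of φ: ∂Ω = { x ∈ ℝ^m : φ(x) = 0 }. -/

import Mathlib

open Topology Filter


/-- If `φ : ℝ^m → ℝ` is everywhere differentiable and its derivative does not vanish
on the zero level set, then the topological boundary of `Ω = {φ < 0}` is exactly the
zero level set `{φ = 0}`. -/
theorem frontier_sublevel_eq_zero_level_set {m : ℕ}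
    (φ : EuclideanSpace ℝ (Fin m) → ℝ) (hφ : Differentiable ℝ φ)
    (hgrad : ∀ x : EuclideanSpace ℝ (Fin m), φ x = 0 → fderiv ℝ φ x ≠ 0) :
    frontier {x : EuclideanSpace ℝ (Fin m) | φ x < 0}
      = {x : EuclideanSpace ℝ (Fin m) | φ x = 0} := by
  apply Set.Subset.antisymm
  · -- frontier ⊆ zero set, by continuity
    exact frontier_lt_subset_eq (hφ.continuous) continuous_const
  · intro x hx
    simp only [Set.mem_setOf_eq] at hx
    rw [frontier_eq_closure_inter_closure]
    constructor
    · -- x ∈ closure {φ < 0}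
      obtain ⟨u, hu⟩ : ∃ u, fderiv ℝ φ x u ≠ 0 := by
        by_contra h
        push_neg at h
        exact hgrad x hx (ContinuousLinearMap.ext fun u => h u)
      set v : EuclideanSpace ℝ (Fin m) := (-(fderiv ℝ φ x u)) • u with hv
      have hd : fderiv ℝ φ x v = -(fderiv ℝ φ x u) ^ 2 := by
        simp [hv, sq, mul_comm]
      have hdneg : fderiv ℝ φ x v < 0 := by
        rw [hd]
        have h2 : (0:ℝ) < (fderiv ℝ φ x u) ^ 2 := by positivity
        linarith
      -- g t = φ (x + t • v) has derivative (fderiv φ x v) < 0 at 0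
      have hline : HasDerivAt (fun t : ℝ => x + t • v) v 0 := by
        simpa using ((hasDerivAt_id (0:ℝ)).smul_const v).const_add x
      have hg : HasDerivAt (fun t : ℝ => φ (x + t • v)) (fderiv ℝ φ x v) 0 := by
        have := ((hφ (x + (0:ℝ) • v)).hasFDerivAt).comp_hasDerivAt 0 hline
        simp only [zero_smul, add_zero] at this
        exact this
      have hslope := hasDerivAt_iff_tendsto_slope.mp hg
      have hev : ∀ᶠ t in 𝓝[>] (0:ℝ), slope (fun t : ℝ => φ (x + t • v)) 0 t < 0 := by
        have : ∀ᶠ t in 𝓝[≠] (0:ℝ), slope (fun t : ℝ => φ (x + t • v)) 0 t < 0 :=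
          hslope.eventually (eventually_lt_nhds hdneg)
        exact nhdsWithin_mono 0 (fun t ht => ne_of_gt ht) this
      have hev2 : ∀ᶠ t in 𝓝[>] (0:ℝ), φ (x + t • v) < 0 := by
        filter_upwards [hev, self_mem_nhdsWithin] with t ht ht'
        have ht0 : (0:ℝ) < t := ht'
        rw [slope_def_field] at ht
        have : φ (x + t • v) / t < 0 := by
          simpa [hx] using ht
        have := (div_neg_iff).mp this
        rcases this with ⟨h1, h2⟩ | ⟨h1, h2⟩
        · linarith
        · exact h1
      have htend : Filter.Tendsto (fun t : ℝ => x + t • v) (𝓝[>] (0:ℝ)) (𝓝 x) := by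
        have : Filter.Tendsto (fun t : ℝ => x + t • v) (𝓝 (0:ℝ)) (𝓝 x) := by
          have := hline.continuousAt.tendsto
          simpa using this
        exact this.mono_left nhdsWithin_le_nhds
      exact mem_closure_of_tendsto htend (hev2.mono fun t ht => ht)
    · -- x ∈ closure {φ < 0}ᶜ = closure {¬ φ < 0}
      apply subset_closure
      simp [hx]
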